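/- Let F_q be a finite field with q ≡ 1 (mod 3), and a₁,a₂,a₃ ∈ F_q* with a₁a₂a₃ a nonzero cube. Then the number M of solutions (x₁,x₂,x₃) ∈ F_q³ of a₁x₁³ + a₂x₂³ + a₃x₃³ = 0 satisfies M = q² + c(q−1), where c = 2·Re(G(χ,ψ)³)/q for any multiplicative character χ of order 3 and nontrivial additive character ψ; equivalently M = q² + (q−1)(G(χ,ψ)³ + G(χ̄,ψ)³)/q. -/

import Mathlib

open Finset Polynomial

section Aux

variable {F : Type*} [Field F] [Fintype F] [DecidableEq F]

private lemma cube_card_le (u : F) :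
    (univ.filter (fun x : F => x ^ 3 = u)).card ≤ 3 := by
  have hsub : (univ.filter (fun x : F => x ^ 3 = u)) ⊆ (nthRoots 3 u).toFinset := by
    intro x hx
    rw [mem_filter] at hx
    rw [Multiset.mem_toFinset, mem_nthRoots (by norm_num)]
    exact hx.2
  calc (univ.filter (fun x : F => x ^ 3 = u)).card
      ≤ (nthRoots 3 u).toFinset.card := Finset.card_le_card hsub
    _ ≤ Multiset.card (nthRoots 3 u) := Multiset.toFinset_card_le _
    _ ≤ 3 := card_nthRoots 3 u

private lemma one_apply_ne {a : F} (ha : a ≠ 0) : (1 : MulChar F ℂ) a = 1 := by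
  have h := (isUnit_iff_ne_zero.2 ha).unit_spec
  rw [← h]
  exact MulChar.one_apply_coe _

variable {χ : MulChar F ℂ}

private lemma chi_cube_val (hχ : orderOf χ = 3) {c : F} (hc : c ≠ 0) : χ c ^ 3 = 1 := by
  have h3 : χ ^ 3 = 1 := hχ ▸ pow_orderOf_eq_one χ
  have h := congrArg (fun χ' : MulChar F ℂ => χ' c) h3
  rwa [MulChar.pow_apply' χ (by norm_num) c, one_apply_ne hc] at h

private lemma chi_ne_one (hχ : orderOf χ = 3) : χ ≠ 1 := by
  intro h
  rw [h, orderOf_one] at hχ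
  norm_num at hχ

private lemma chi_sq_ne_one (hχ : orderOf χ = 3) : χ ^ 2 ≠ 1 := by
  intro h
  have := orderOf_dvd_of_pow_eq_one h
  rw [hχ] at this
  norm_num at this

private lemma chi_zero : χ (0 : F) = 0 :=
  MulChar.map_nonunit χ (by simp)

private lemma cube_count_of_chi_ne_one (hχ : orderOf χ = 3) {u : F} (hu : u ≠ 0)
    (h1 : χ u ≠ 1) : (univ.filter (fun x : F => x ^ 3 = u)).card = 0 := by
  rw [Finset.card_eq_zero, Finset.filter_eq_empty_iff]
  intro x _ hx3
  apply h1
  have hx : x ≠ 0 := by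
    rintro rfl
    exact hu (by rw [← hx3]; ring)
  rw [← hx3, map_pow]
  exact chi_cube_val hχ hx

private lemma chi_ite (hχ : orderOf χ = 3) (v : F) :
    (1 : MulChar F ℂ) v + χ v + (χ ^ 2) v = if χ v = 1 then 3 else 0 := by
  rcases eq_or_ne v 0 with rfl | hv
  · have h0 : ((1 : MulChar F ℂ)) (0 : F) = 0 := MulChar.map_nonunit _ (by simp)
    have h2 : ((χ ^ 2)) (0 : F) = 0 := MulChar.map_nonunit _ (by simp)
    rw [h0, chi_zero, h2, if_neg (show ¬(0:ℂ) = 1 by norm_num)]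
    norm_num
  · have hz : χ v ^ 3 = 1 := chi_cube_val hχ hv
    rw [one_apply_ne hv, MulChar.pow_apply' χ (by norm_num) v]
    rcases eq_or_ne (χ v) 1 with h | h
    · rw [if_pos h, h]; norm_num
    · rw [if_neg h]
      have hfac : (χ v - 1) * (χ v ^ 2 + χ v + 1) = 0 := by linear_combination hz
      rcases mul_eq_zero.mp hfac with h' | h'
      · exact absurd (by linear_combination h') h
      · linear_combination h'

private lemma card_chi_eq_one (hχ : orderOf χ = 3) :
    3 * (univ.filter (fun v : F => χ v = 1)).card + 1 = Fintype.card F := by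
  have hsum : ∑ v : F, ((1 : MulChar F ℂ) v + χ v + (χ ^ 2) v)
      = (Fintype.card F : ℂ) - 1 := by
    rw [Finset.sum_add_distrib, Finset.sum_add_distrib, MulChar.sum_one_eq_card_units,
      MulChar.sum_eq_zero_of_ne_one (chi_ne_one hχ),
      MulChar.sum_eq_zero_of_ne_one (chi_sq_ne_one hχ), Fintype.card_units]
    have h1 : (1 : ℕ) ≤ Fintype.card F := Fintype.card_pos
    push_cast [Nat.cast_sub h1]
    ring
  have hsum2 : ∑ v : F, ((1 : MulChar F ℂ) v + χ v + (χ ^ 2) v)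
      = 3 * ((univ.filter (fun v : F => χ v = 1)).card : ℂ) := by
    calc ∑ v : F, ((1 : MulChar F ℂ) v + χ v + (χ ^ 2) v)
        = ∑ v : F, (if χ v = 1 then (3:ℂ) else 0) :=
          Finset.sum_congr rfl fun v _ => chi_ite hχ v
      _ = ∑ v ∈ univ.filter (fun v : F => χ v = 1), (3:ℂ) := (Finset.sum_filter _ _).symm
      _ = 3 * ((univ.filter (fun v : F => χ v = 1)).card : ℂ) := by
          rw [Finset.sum_const, nsmul_eq_mul]; ring
  have : ((3 * (univ.filter (fun v : F => χ v = 1)).card + 1 : ℕ) : ℂ)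
      = ((Fintype.card F : ℕ) : ℂ) := by
    push_cast
    rw [hsum2.symm.trans hsum]; ring
  exact_mod_cast this

private lemma cube_count_of_chi_eq_one (hχ : orderOf χ = 3) {u : F} (hu : u ≠ 0)
    (h1 : χ u = 1) : (univ.filter (fun x : F => x ^ 3 = u)).card = 3 := by
  classical
  set n : F → ℕ := fun v => (univ.filter (fun x : F => x ^ 3 = v)).card with hn
  set K : Finset F := univ.filter (fun v : F => χ v = 1) with hK
  have huK : u ∈ K := by simp [hK, h1]
  -- total count over all fibers
  have htotal : ∑ v : F, n v = Fintype.card F := by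
    rw [← Finset.card_univ]
    exact (Finset.card_eq_sum_card_fiberwise (f := fun x : F => x ^ 3)
      (fun x _ => mem_univ _)).symm
  -- n 0 = 1
  have hn0 : n 0 = 1 := by
    have : univ.filter (fun x : F => x ^ 3 = (0:F)) = {0} := by
      ext x
      simp [pow_eq_zero_iff (n := 3) (by norm_num)]
    show (univ.filter (fun x : F => x ^ 3 = (0:F))).card = 1
    rw [this, Finset.card_singleton]
  -- sum over K equals q - 1
  have hK0 : (0 : F) ∉ K := by simp [hK, chi_zero]
  have hsplit : ∑ v : F, n v = n 0 + ∑ v ∈ univ.erase 0, n v :=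
    (Finset.add_sum_erase univ n (mem_univ 0)).symm
  have hvanish : ∑ v ∈ univ.erase 0, n v = ∑ v ∈ K, n v := by
    refine (Finset.sum_subset ?_ ?_).symm
    · intro v hv
      rw [hK, mem_filter] at hv
      refine Finset.mem_erase.mpr ⟨?_, mem_univ _⟩
      rintro rfl
      rw [chi_zero] at hv
      exact one_ne_zero hv.2.symm
    · intro v hv hvK
      have hv0 : v ≠ 0 := (Finset.mem_erase.mp hv).1
      have : χ v ≠ 1 := by
        intro h
        exact hvK (by simp [hK, h])
      exact cube_count_of_chi_ne_one hχ hv0 this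
  have hKsum : ∑ v ∈ K, n v = 3 * K.card := by
    have e1 : n 0 + ∑ v ∈ K, n v = Fintype.card F := by
      rw [← hvanish, ← hsplit, htotal]
    rw [hn0] at e1
    have hq := card_chi_eq_one hχ
    rw [← hK] at hq
    omega
  by_contra hne
  have hlt : n u < 3 := lt_of_le_of_ne (cube_card_le u) hne
  have : ∑ v ∈ K, n v < ∑ v ∈ K, 3 :=
    Finset.sum_lt_sum (fun i _ => cube_card_le i) ⟨u, huK, hlt⟩
  rw [hKsum, Finset.sum_const, smul_eq_mul] at this
  omega

private lemma cube_count (hχ : orderOf χ = 3) (u : F) :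
    ((univ.filter (fun x : F => x ^ 3 = u)).card : ℂ)
      = (if u = 0 then 1 else 0) + (1 : MulChar F ℂ) u + χ u + (χ ^ 2) u := by
  rcases eq_or_ne u 0 with rfl | hu
  · have : univ.filter (fun x : F => x ^ 3 = (0:F)) = {0} := by
      ext x
      simp [pow_eq_zero_iff (n := 3) (by norm_num)]
    have h0 : ((1 : MulChar F ℂ)) (0 : F) = 0 := MulChar.map_nonunit _ (by simp)
    have h2 : ((χ ^ 2)) (0 : F) = 0 := MulChar.map_nonunit _ (by simp)
    rw [this, Finset.card_singleton, if_pos rfl, h0, chi_zero, h2]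
    norm_num
  · rw [if_neg hu, zero_add, chi_ite hχ u]
    rcases eq_or_ne (χ u) 1 with h | h
    · rw [cube_count_of_chi_eq_one hχ hu h, if_pos h]
      norm_num
    · rw [cube_count_of_chi_ne_one hχ hu h, if_neg h]
      norm_num

private lemma S_val (hχ : orderOf χ = 3) {ψ : AddChar F ℂ} (hψ : ψ.IsPrimitive)
    {c : F} (hc : c ≠ 0) :
    ∑ x : F, ψ (c * x ^ 3)
      = χ c ^ 2 * gaussSum χ ψ + χ c * gaussSum (χ ^ 2) ψ := by
  have hz : χ c ^ 3 = 1 := chi_cube_val hχ hc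
  have hfib : ∑ x : F, ψ (c * x ^ 3)
      = ∑ u : F, ((univ.filter (fun x : F => x ^ 3 = u)).card : ℂ) * ψ (c * u) := by
    rw [← Finset.sum_fiberwise univ (fun x : F => x ^ 3) (fun x => ψ (c * x ^ 3))]
    refine Finset.sum_congr rfl fun u _ => ?_
    have : ∑ x ∈ univ.filter (fun x : F => x ^ 3 = u), ψ (c * x ^ 3)
        = ∑ x ∈ univ.filter (fun x : F => x ^ 3 = u), ψ (c * u) := by
      refine Finset.sum_congr rfl fun x hx => ?_
      rw [(Finset.mem_filter.mp hx).2]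
    rw [this, Finset.sum_const, nsmul_eq_mul]
  rw [hfib]
  have hexp : ∀ u : F, ((univ.filter (fun x : F => x ^ 3 = u)).card : ℂ) * ψ (c * u)
      = (if u = 0 then 1 else 0) * ψ (c * u) + (1 : MulChar F ℂ) u * ψ (c * u)
        + χ u * ψ (c * u) + (χ ^ 2) u * ψ (c * u) := by
    intro u
    rw [cube_count hχ u]
    ring
  rw [Finset.sum_congr rfl fun u _ => hexp u]
  rw [Finset.sum_add_distrib, Finset.sum_add_distrib, Finset.sum_add_distrib]
  -- first sum
  have hT0 : ∑ u : F, (if u = 0 then (1:ℂ) else 0) * ψ (c * u) = 1 := by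
    rw [Finset.sum_eq_single 0]
    · simp
    · intro b _ hb; rw [if_neg hb, zero_mul]
    · intro h; exact absurd (mem_univ 0) h
  -- second sum
  have hmulshift : ∑ u : F, ψ (c * u) = 0 := by
    have h := AddChar.sum_mulShift c hψ
    rw [if_neg hc] at h
    norm_num at h
    calc ∑ u : F, ψ (c * u) = ∑ u : F, ψ (u * c) :=
          Finset.sum_congr rfl fun u _ => by rw [mul_comm]
      _ = 0 := h
  have hT1 : ∑ u : F, (1 : MulChar F ℂ) u * ψ (c * u) = -1 := by
    have hpt : ∀ u : F, (1 : MulChar F ℂ) u * ψ (c * u)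
        = ψ (c * u) - (if u = 0 then 1 else 0) := by
      intro u
      rcases eq_or_ne u 0 with rfl | hu
      · have h0 : ((1 : MulChar F ℂ)) (0 : F) = 0 := MulChar.map_nonunit _ (by simp)
        simp [h0]
      · rw [one_apply_ne hu, if_neg hu, one_mul, sub_zero]
    rw [Finset.sum_congr rfl fun u _ => hpt u, Finset.sum_sub_distrib, hmulshift]
    rw [Finset.sum_eq_single 0]
    · simp
    · intro b _ hb; rw [if_neg hb]
    · intro h; exact absurd (mem_univ 0) h
  -- Gauss sum pieces
  have hgauss : ∀ (η : MulChar F ℂ), ∑ u : F, η u * ψ (c * u)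
      = gaussSum η (ψ.mulShift c) := by
    intro η
    rw [gaussSum]
    exact Finset.sum_congr rfl fun u _ => by rw [AddChar.mulShift_apply]
  have hcu : IsUnit c := isUnit_iff_ne_zero.mpr hc
  have hT2 : ∑ u : F, χ u * ψ (c * u) = χ c ^ 2 * gaussSum χ ψ := by
    have hms := gaussSum_mulShift χ ψ hcu.unit
    rw [hcu.unit_spec] at hms
    rw [hgauss χ]
    calc gaussSum χ (ψ.mulShift c)
        = χ c ^ 3 * gaussSum χ (ψ.mulShift c) := by rw [hz, one_mul]
      _ = χ c ^ 2 * (χ c * gaussSum χ (ψ.mulShift c)) := by ring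
      _ = χ c ^ 2 * gaussSum χ ψ := by rw [hms]
  have hT3 : ∑ u : F, (χ ^ 2) u * ψ (c * u) = χ c * gaussSum (χ ^ 2) ψ := by
    have hms := gaussSum_mulShift (χ ^ 2) ψ hcu.unit
    rw [hcu.unit_spec] at hms
    have h2c : (χ ^ 2) c = χ c ^ 2 := MulChar.pow_apply' χ (by norm_num) c
    rw [hgauss (χ ^ 2)]
    calc gaussSum (χ ^ 2) (ψ.mulShift c)
        = χ c ^ 3 * gaussSum (χ ^ 2) (ψ.mulShift c) := by rw [hz, one_mul]
      _ = χ c * ((χ ^ 2) c * gaussSum (χ ^ 2) (ψ.mulShift c)) := by rw [h2c]; ring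
      _ = χ c * gaussSum (χ ^ 2) ψ := by rw [hms]
  rw [hT0, hT1, hT2, hT3]
  ring

end Aux

/-- For a finite field `F` with `q ≡ 1 (mod 3)` and `a₁a₂a₃` a nonzero cube, the number of
solutions of `a₁x₁³ + a₂x₂³ + a₃x₃³ = 0` equals `q² + (q-1)·(G(χ,ψ)³ + G(χ̄,ψ)³)/q`
for any cubic character `χ` and nontrivial additive character `ψ`. -/
theorem count_diag_cubic_cube_case (F : Type*) [Field F] [Fintype F] [DecidableEq F]
    (hq : Fintype.card F % 3 = 1)
    (a₁ a₂ a₃ : F) (ha₁ : a₁ ≠ 0) (ha₂ : a₂ ≠ 0) (ha₃ : a₃ ≠ 0)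
    (hcube : ∃ w : F, w ≠ 0 ∧ w ^ 3 = a₁ * a₂ * a₃)
    (χ : MulChar F ℂ) (hχ : orderOf χ = 3)
    (ψ : AddChar F ℂ) (hψ : ∃ a : F, ψ a ≠ 1) :
    (Fintype.card {x : F × F × F //
        a₁ * x.1 ^ 3 + a₂ * x.2.1 ^ 3 + a₃ * x.2.2 ^ 3 = 0} : ℂ) =
      (Fintype.card F : ℂ) ^ 2 +
        ((Fintype.card F : ℂ) - 1) *
          (gaussSum χ ψ ^ 3 + gaussSum (χ ^ 2) ψ ^ 3) / (Fintype.card F : ℂ) := by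
  classical
  have hψ1 : ψ ≠ 1 := by
    obtain ⟨a, ha⟩ := hψ
    intro h
    exact ha (by rw [h]; rfl)
  have hψp : ψ.IsPrimitive := AddChar.IsPrimitive.of_ne_one hψ1
  have hq0 : ((Fintype.card F : ℂ)) ≠ 0 := Nat.cast_ne_zero.mpr Fintype.card_ne_zero
  set g₁ : ℂ := gaussSum χ ψ with hg1
  set g₂ : ℂ := gaussSum (χ ^ 2) ψ with hg2
  set f : F × F × F → F := fun x => a₁ * x.1 ^ 3 + a₂ * x.2.1 ^ 3 + a₃ * x.2.2 ^ 3 with hf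
  have hMcard : (Fintype.card {x : F × F × F //
      a₁ * x.1 ^ 3 + a₂ * x.2.1 ^ 3 + a₃ * x.2.2 ^ 3 = 0})
      = (univ.filter (fun x : F × F × F => f x = 0)).card := Fintype.card_subtype _
  -- Step 1: express q * M as a double character sum
  have h1 : ((univ.filter (fun x : F × F × F => f x = 0)).card : ℂ) * (Fintype.card F : ℂ)
      = ∑ x : F × F × F, ∑ t : F, ψ (t * f x) := by
    have hinner : ∀ x : F × F × F, ∑ t : F, ψ (t * f x)
        = (((if f x = 0 then Fintype.card F else 0 : ℕ)) : ℂ) :=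
      fun x => AddChar.sum_mulShift (f x) hψp
    rw [Finset.sum_congr rfl fun x _ => hinner x]
    simp only [Nat.cast_ite, Nat.cast_zero]
    rw [Finset.sum_ite, Finset.sum_const_zero, add_zero, Finset.sum_const, nsmul_eq_mul]
  -- Step 2/3: swap sums and factor the inner sum
  have h3 : ∀ t : F, ∑ x : F × F × F, ψ (t * f x)
      = (∑ y : F, ψ (t * a₁ * y ^ 3)) *
        ((∑ y : F, ψ (t * a₂ * y ^ 3)) * (∑ y : F, ψ (t * a₃ * y ^ 3))) := by
    intro t
    have hsplit : ∀ x : F × F × F, ψ (t * f x)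
        = ψ (t * a₁ * x.1 ^ 3) * (ψ (t * a₂ * x.2.1 ^ 3) * ψ (t * a₃ * x.2.2 ^ 3)) := by
      intro x
      have harg : t * f x
          = t * a₁ * x.1 ^ 3 + (t * a₂ * x.2.1 ^ 3 + t * a₃ * x.2.2 ^ 3) := by
        rw [hf]; ring
      rw [harg, AddChar.map_add_eq_mul, AddChar.map_add_eq_mul]
    calc ∑ x : F × F × F, ψ (t * f x)
        = ∑ x₁ : F, ∑ yz : F × F,
            ψ (t * a₁ * x₁ ^ 3) * (ψ (t * a₂ * yz.1 ^ 3) * ψ (t * a₃ * yz.2 ^ 3)) := by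
          rw [Finset.sum_congr rfl fun x _ => hsplit x, Fintype.sum_prod_type]
      _ = ∑ x₁ : F, ψ (t * a₁ * x₁ ^ 3) *
            ∑ yz : F × F, (ψ (t * a₂ * yz.1 ^ 3) * ψ (t * a₃ * yz.2 ^ 3)) :=
          Finset.sum_congr rfl fun x₁ _ => (Finset.mul_sum _ _ _).symm
      _ = (∑ y : F, ψ (t * a₁ * y ^ 3)) *
            ∑ yz : F × F, (ψ (t * a₂ * yz.1 ^ 3) * ψ (t * a₃ * yz.2 ^ 3)) :=
          (Finset.sum_mul _ _ _).symm
      _ = (∑ y : F, ψ (t * a₁ * y ^ 3)) *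
            ((∑ y : F, ψ (t * a₂ * y ^ 3)) * (∑ y : F, ψ (t * a₃ * y ^ 3))) := by
          congr 1
          rw [Fintype.sum_prod_type]
          exact (Finset.sum_mul_sum univ univ (fun y : F => ψ (t * a₂ * y ^ 3))
            (fun y : F => ψ (t * a₃ * y ^ 3))).symm
  -- value of the product at t = 0
  have h0 : (∑ y : F, ψ ((0:F) * a₁ * y ^ 3)) *
      ((∑ y : F, ψ ((0:F) * a₂ * y ^ 3)) * (∑ y : F, ψ ((0:F) * a₃ * y ^ 3)))
      = (Fintype.card F : ℂ) ^ 3 := by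
    simp only [zero_mul, AddChar.map_zero_eq_one, Finset.sum_const, Finset.card_univ,
      nsmul_eq_mul, mul_one]
    ring
  -- algebra: χ(a₁)χ(a₂)χ(a₃) = 1
  have hw : χ a₁ * χ a₂ * χ a₃ = 1 := by
    obtain ⟨w, hw0, hw3⟩ := hcube
    rw [← map_mul, ← map_mul, ← hw3, map_pow]
    exact chi_cube_val hχ hw0
  set C₁ : ℂ := g₁ ^ 2 * g₂ * (χ a₁ * χ a₂ + χ a₁ * χ a₃ + χ a₂ * χ a₃) with hC1
  set C₂ : ℂ := g₁ * g₂ ^ 2 * (χ a₁ + χ a₂ + χ a₃) with hC2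
  -- value of the product at t ≠ 0
  have h5 : ∀ t ∈ univ.erase (0:F), (∑ y : F, ψ (t * a₁ * y ^ 3)) *
      ((∑ y : F, ψ (t * a₂ * y ^ 3)) * (∑ y : F, ψ (t * a₃ * y ^ 3)))
      = (g₁ ^ 3 + g₂ ^ 3) + (χ ^ 2) t * C₁ + χ t * C₂ := by
    intro t ht
    have ht0 : t ≠ 0 := (Finset.mem_erase.mp ht).1
    have hz : χ t ^ 3 = 1 := chi_cube_val hχ ht0
    rw [S_val hχ hψp (mul_ne_zero ht0 ha₁), S_val hχ hψp (mul_ne_zero ht0 ha₂),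
      S_val hχ hψp (mul_ne_zero ht0 ha₃), map_mul, map_mul, map_mul,
      MulChar.pow_apply' χ (by norm_num) t, hC1, hC2]
    linear_combination
      (((χ a₁ * χ a₂ * χ a₃) + 1) * χ t ^ 6 * g₁ ^ 3
        + χ t ^ 5 * g₁ ^ 2 * g₂ * (χ a₁ * χ a₂ + χ a₁ * χ a₃ + χ a₂ * χ a₃)
        + χ t ^ 4 * g₁ * g₂ ^ 2 * (χ a₁ + χ a₂ + χ a₃)
        + χ t ^ 3 * g₂ ^ 3) * hw
      + (g₁ ^ 3 * (χ t ^ 3 + 1)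
        + χ t ^ 2 * g₁ ^ 2 * g₂ * (χ a₁ * χ a₂ + χ a₁ * χ a₃ + χ a₂ * χ a₃)
        + χ t * g₁ * g₂ ^ 2 * (χ a₁ + χ a₂ + χ a₃)
        + g₂ ^ 3) * hz
  -- sum over t ≠ 0
  have h6 : ∑ t ∈ univ.erase (0:F),
      ((g₁ ^ 3 + g₂ ^ 3) + (χ ^ 2) t * C₁ + χ t * C₂)
      = ((Fintype.card F : ℂ) - 1) * (g₁ ^ 3 + g₂ ^ 3) := by
    rw [Finset.sum_add_distrib, Finset.sum_add_distrib, Finset.sum_const,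
      ← Finset.sum_mul, ← Finset.sum_mul]
    have e2 : ∑ t ∈ univ.erase (0:F), (χ ^ 2) t = 0 := by
      rw [Finset.sum_erase _ (MulChar.map_nonunit _ (by simp))]
      exact MulChar.sum_eq_zero_of_ne_one (chi_sq_ne_one hχ)
    have e1 : ∑ t ∈ univ.erase (0:F), χ t = 0 := by
      rw [Finset.sum_erase _ chi_zero]
      exact MulChar.sum_eq_zero_of_ne_one (chi_ne_one hχ)
    rw [e1, e2, zero_mul, zero_mul, add_zero, add_zero,
      Finset.card_erase_of_mem (mem_univ _), Finset.card_univ, nsmul_eq_mul]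
    have : ((Fintype.card F - 1 : ℕ) : ℂ) = (Fintype.card F : ℂ) - 1 := by
      have h1' : (1 : ℕ) ≤ Fintype.card F := Fintype.card_pos
      push_cast [Nat.cast_sub h1']
      ring
    rw [this]
  -- assemble
  have hM : ((univ.filter (fun x : F × F × F => f x = 0)).card : ℂ) * (Fintype.card F : ℂ)
      = (Fintype.card F : ℂ) ^ 3 + ((Fintype.card F : ℂ) - 1) * (g₁ ^ 3 + g₂ ^ 3) := by
    rw [h1, Finset.sum_comm, Finset.sum_congr rfl fun t _ => h3 t,
      ← Finset.add_sum_erase univ _ (mem_univ (0:F)), h0,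
      Finset.sum_congr rfl h5, h6]
  rw [hMcard]
  field_simp
  linear_combination hM
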